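/- In the setting of the componentwise solution classification for the regularized second-stage Cournot LCP, the total supply satisfies T^ε = (γ Σ_{i∈I_3} x_i + εγ Σ_{i∈I_2∪I_3} p_i + Σ_{i∈I_2} p_i) / ((εγ(|I_2| + |I_3| + 1) + |I_2| + 1) γ), where I_2 = {j : γT^ε + λ^ε_j − p_j < 0, y^ε_j ≤ x_j} and I_3 = {j : γT^ε + λ^ε_j − p_j < 0, y^ε_j > x_j}. -/

import Mathlib

open Finset

/-- Closed form of the total supply `T^ε` of the regularized second-stage
Cournot LCP in terms of the index sets `I₂` and `I₃`. -/
theorem stmt10 (J : ℕ) (hJ : 1 ≤ J) (γ ε : ℝ) (hγ : 0 < γ) (hε : 0 < ε)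
    (x p y lam : Fin J → ℝ) (hx : ∀ j, 0 ≤ x j)
    (T : ℝ) (hT : T = ∑ i, y i)
    (h1 : ∀ j, 0 ≤ y j)
    (h2 : ∀ j, 0 ≤ γ * y j + γ * T + lam j - p j)
    (h3 : ∀ j, y j * (γ * y j + γ * T + lam j - p j) = 0)
    (h4 : ∀ j, 0 ≤ lam j)
    (h5 : ∀ j, 0 ≤ x j - y j + ε * lam j)
    (h6 : ∀ j, lam j * (x j - y j + ε * lam j) = 0)
    (I₂ I₃ : Finset (Fin J))
    (hI₂ : I₂ = univ.filter (fun j => γ * T + lam j - p j < 0 ∧ y j ≤ x j))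
    (hI₃ : I₃ = univ.filter (fun j => γ * T + lam j - p j < 0 ∧ x j < y j)) :
    T = (γ * ∑ i ∈ I₃, x i + ε * γ * ∑ i ∈ I₂ ∪ I₃, p i + ∑ i ∈ I₂, p i) /
      ((ε * γ * ((I₂.card : ℝ) + (I₃.card : ℝ) + 1) + (I₂.card : ℝ) + 1) * γ) := by
  -- membership characterizations
  have hmem2 : ∀ j, j ∈ I₂ ↔ (γ * T + lam j - p j < 0 ∧ y j ≤ x j) := by
    intro j; simp [hI₂]
  have hmem3 : ∀ j, j ∈ I₃ ↔ (γ * T + lam j - p j < 0 ∧ x j < y j) := by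
    intro j; simp [hI₃]
  -- On I₂: lam j = 0 and γ y j = p j - γ T
  have hlam2 : ∀ j ∈ I₂, lam j = 0 := by
    intro j hj
    rcases mul_eq_zero.mp (h6 j) with h | h
    · exact h
    · obtain ⟨_, hle⟩ := (hmem2 j).mp hj
      nlinarith [h4 j, h5 j]
  have hy2 : ∀ j ∈ I₂, γ * y j = p j - γ * T := by
    intro j hj
    obtain ⟨hlt, _⟩ := (hmem2 j).mp hj
    have hl0 := hlam2 j hj
    rcases mul_eq_zero.mp (h3 j) with h | h
    · nlinarith [h2 j]
    · linarith
  -- On I₃: (εγ+1) y j = ε (p j - γ T) + x j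
  have hy3 : ∀ j ∈ I₃, (ε * γ + 1) * y j = ε * (p j - γ * T) + x j := by
    intro j hj
    obtain ⟨hlt, hxy⟩ := (hmem3 j).mp hj
    have hlampos : 0 < lam j := by
      rcases lt_or_eq_of_le (h4 j) with h | h
      · exact h
      · exfalso; have := h5 j; rw [← h] at this; nlinarith
    have hbr : x j - y j + ε * lam j = 0 := by
      rcases mul_eq_zero.mp (h6 j) with h | h
      · exact absurd h (ne_of_gt hlampos)
      · exact h
    have hypos : 0 < y j := lt_of_le_of_lt (hx j) hxy
    have hbr2 : γ * y j + γ * T + lam j - p j = 0 := by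
      rcases mul_eq_zero.mp (h3 j) with h | h
      · exact absurd h (ne_of_gt hypos)
      · exact h
    nlinarith [hbr, hbr2]
  -- Outside I₂ ∪ I₃ : y j = 0
  have hy0 : ∀ j ∈ (univ : Finset (Fin J)), j ∉ I₂ ∪ I₃ → y j = 0 := by
    intro j _ hj
    rw [mem_union] at hj
    push_neg at hj
    obtain ⟨hj2, hj3⟩ := hj
    rw [hmem2] at hj2
    rw [hmem3] at hj3
    by_cases hs : γ * T + lam j - p j < 0
    · exfalso
      by_cases hle : y j ≤ x j
      · exact hj2 ⟨hs, hle⟩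
      · exact hj3 ⟨hs, lt_of_not_ge hle⟩
    · push_neg at hs
      rcases mul_eq_zero.mp (h3 j) with h | h
      · exact h
      · nlinarith [h1 j]
  have hdisj : Disjoint I₂ I₃ := by
    rw [Finset.disjoint_left]
    intro j hj2 hj3
    obtain ⟨_, hle⟩ := (hmem2 j).mp hj2
    obtain ⟨_, hlt⟩ := (hmem3 j).mp hj3
    linarith
  -- total
  have hTsum : T = (∑ i ∈ I₂, y i) + ∑ i ∈ I₃, y i := by
    rw [hT, ← sum_union hdisj]
    exact (sum_subset (subset_univ _) (fun j hj hnj => hy0 j hj hnj)).symm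
  have e2 : γ * ∑ i ∈ I₂, y i =
      (∑ i ∈ I₂, p i) - (I₂.card : ℝ) * (γ * T) := by
    rw [mul_sum]
    rw [sum_congr rfl hy2, sum_sub_distrib, sum_const, nsmul_eq_mul]
  have e3 : (ε * γ + 1) * ∑ i ∈ I₃, y i =
      ε * (∑ i ∈ I₃, p i) - (I₃.card : ℝ) * (ε * (γ * T)) + ∑ i ∈ I₃, x i := by
    rw [mul_sum, sum_congr rfl hy3, sum_add_distrib]
    rw [show (fun j => ε * (p j - γ * T)) = (fun j => ε * p j - ε * (γ * T)) by
      funext j; ring]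
    rw [sum_sub_distrib, sum_const, nsmul_eq_mul, ← mul_sum]
  have eU : ∑ i ∈ I₂ ∪ I₃, p i = (∑ i ∈ I₂, p i) + ∑ i ∈ I₃, p i :=
    sum_union hdisj
  have hden : ((ε * γ * ((I₂.card : ℝ) + (I₃.card : ℝ) + 1) + (I₂.card : ℝ) + 1) * γ) ≠ 0 := by
    have h2 : (0:ℝ) ≤ (I₂.card : ℝ) := Nat.cast_nonneg _
    have h3 : (0:ℝ) ≤ (I₃.card : ℝ) := Nat.cast_nonneg _
    refine mul_ne_zero (ne_of_gt ?_) (ne_of_gt hγ)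
    have hεγ := mul_pos hε hγ
    nlinarith [mul_nonneg hεγ.le (add_nonneg h2 h3)]
  rw [eq_div_iff hden]
  linear_combination (γ * (ε * γ + 1)) * hTsum + (ε * γ + 1) * e2 + γ * e3 - ε * γ * eU
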